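/- Let L : ℝⁿ → ℝ be differentiable with H-Lipschitz gradient for some H > 0, let 0 < α ≤ 1/H and c ∈ [0, 1). Let θ ∈ ℝⁿ with g₀ := ∇L(θ) ≠ 0, let g_ω ∈ ℝⁿ with g_ω ≠ 0, and define d := g₀ + (c‖g₀‖/‖g_ω‖) · g_ω and cos φ := ⟨g₀, g_ω⟩/(‖g₀‖‖g_ω‖). If cos φ ≤ 0, then L(θ − αd) − L(θ) ≤ −(α/2)(1 − c² + 2c·cos φ)‖g₀‖². -/

import Mathlib

set_option maxHeartbeats 1000000


open RealInnerProductSpace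

/-- Descent lemma: quadratic upper bound for a function with `H`-Lipschitz gradient. -/
lemma descent_lemma {n : ℕ} (L : EuclideanSpace ℝ (Fin n) → ℝ) (H : ℝ) (hH : 0 < H)
    (hdiff : Differentiable ℝ L)
    (hlip : ∀ x y : EuclideanSpace ℝ (Fin n),
      ‖gradient L x - gradient L y‖ ≤ H * ‖x - y‖)
    (x v : EuclideanSpace ℝ (Fin n)) :
    L (x + v) - L x ≤ ⟪gradient L x, v⟫ + H / 2 * ‖v‖ ^ 2 := by
  set g : ℝ → ℝ := fun t =>
    L (x + t • v) - t * ⟪gradient L x, v⟫ - H / 2 * t ^ 2 * ‖v‖ ^ 2 with hg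
  have hderiv : ∀ t : ℝ, HasDerivAt g
      (⟪gradient L (x + t • v), v⟫ - ⟪gradient L x, v⟫ - H * t * ‖v‖ ^ 2) t := by
    intro t
    have hcurve : HasDerivAt (fun t : ℝ => x + t • v) v t := by
      simpa using ((hasDerivAt_id t).smul_const v).const_add x
    have hL : HasDerivAt (fun t : ℝ => L (x + t • v)) ⟪gradient L (x + t • v), v⟫ t := by
      have := ((hdiff (x + t • v)).hasGradientAt.hasFDerivAt).comp_hasDerivAt t hcurve
      simpa [Function.comp_def] using this
    have h1 : HasDerivAt (fun t : ℝ => t * ⟪gradient L x, v⟫) ⟪gradient L x, v⟫ t := by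
      simpa using (hasDerivAt_id t).mul_const ⟪gradient L x, v⟫
    have h2 : HasDerivAt (fun t : ℝ => H / 2 * t ^ 2 * ‖v‖ ^ 2) (H * t * ‖v‖ ^ 2) t := by
      have := (((hasDerivAt_pow 2 t)).const_mul (H / 2)).mul_const (‖v‖ ^ 2)
      convert this using 1
      rfl
      rfl
      ring
    exact (hL.sub h1).sub h2
  have hanti : AntitoneOn g (Set.Icc (0 : ℝ) 1) := by
    apply antitoneOn_of_deriv_nonpos (convex_Icc 0 1)
    · exact fun t _ => ((hderiv t).continuousAt).continuousWithinAt
    · exact fun t _ => ((hderiv t).differentiableAt).differentiableWithinAt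
    · intro t ht
      rw [interior_Icc] at ht
      rw [(hderiv t).deriv]
      have h1 : ⟪gradient L (x + t • v) - gradient L x, v⟫ ≤
          ‖gradient L (x + t • v) - gradient L x‖ * ‖v‖ := real_inner_le_norm _ _
      have h2 : ‖gradient L (x + t • v) - gradient L x‖ ≤ H * ‖t • v‖ := by
        simpa using hlip (x + t • v) x
      have h3 : ‖t • v‖ = t * ‖v‖ := by
        rw [norm_smul, Real.norm_eq_abs, abs_of_pos ht.1]
      rw [inner_sub_left] at h1
      have h4 := mul_le_mul_of_nonneg_right h2 (norm_nonneg v)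
      rw [h3] at h4
      nlinarith [h4]
  have := hanti (Set.left_mem_Icc.2 zero_le_one) (Set.right_mem_Icc.2 zero_le_one) zero_le_one
  simp only [hg, one_smul, one_pow, zero_smul, add_zero, zero_mul, zero_pow, mul_zero,
    sub_zero, one_mul, mul_one] at this
  linarith

/-- Refined per-step bound of the re-organized CAGrad analysis in the regime `cos φ ≤ 0`:
with `d = g₀ + (c ‖g₀‖ / ‖g_ω‖) • g_ω` and `cos φ = ⟪g₀, g_ω⟫ / (‖g₀‖ ‖g_ω‖)`,
`L (θ - α d) - L θ ≤ -(α/2)(1 - c² + 2 c cos φ) ‖g₀‖²`. -/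
theorem cagrad_refined_bound_obtuse {n : ℕ} (L : EuclideanSpace ℝ (Fin n) → ℝ) (H α c : ℝ)
    (hH : 0 < H) (hα : 0 < α) (hαH : α ≤ 1 / H) (hc0 : 0 ≤ c) (hc1 : c < 1)
    (hdiff : Differentiable ℝ L)
    (hlip : ∀ x y : EuclideanSpace ℝ (Fin n),
      ‖gradient L x - gradient L y‖ ≤ H * ‖x - y‖)
    (θ gω : EuclideanSpace ℝ (Fin n))
    (hg₀ : gradient L θ ≠ 0) (hgω : gω ≠ 0)
    (hcos : ⟪gradient L θ, gω⟫ / (‖gradient L θ‖ * ‖gω‖) ≤ 0) :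
    L (θ - α • (gradient L θ + (c * ‖gradient L θ‖ / ‖gω‖) • gω)) - L θ ≤
      -(α / 2) * (1 - c ^ 2 +
          2 * c * (⟪gradient L θ, gω⟫ / (‖gradient L θ‖ * ‖gω‖))) *
        ‖gradient L θ‖ ^ 2 := by
  set g₀ := gradient L θ with hg₀def
  set k : ℝ := c * ‖g₀‖ / ‖gω‖ with hk
  set d := g₀ + k • gω with hd
  have ha : 0 < ‖g₀‖ := norm_pos_iff.2 hg₀
  have hb : 0 < ‖gω‖ := norm_pos_iff.2 hgω
  set s : ℝ := ⟪g₀, gω⟫ with hs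
  set cφ : ℝ := s / (‖g₀‖ * ‖gω‖) with hcφ
  have hs_eq : s = cφ * (‖g₀‖ * ‖gω‖) := by
    rw [hcφ, div_mul_cancel₀]; positivity
  -- apply the descent lemma with v = -(α • d)
  have key := descent_lemma L H hH hdiff hlip θ (-(α • d))
  have hpt : θ + -(α • d) = θ - α • d := by abel
  rw [hpt] at key
  -- compute the inner products
  have hinner_d : ⟪g₀, d⟫ = ‖g₀‖ ^ 2 * (1 + c * cφ) := by
    rw [hd, inner_add_right, real_inner_smul_right, real_inner_self_eq_norm_sq, ← hs, hs_eq, hk]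
    field_simp
  have hnorm_d : ‖d‖ ^ 2 = ‖g₀‖ ^ 2 * (1 + 2 * c * cφ + c ^ 2) := by
    rw [hd, norm_add_sq_real, real_inner_smul_right, norm_smul, ← hs, hs_eq, hk,
      Real.norm_eq_abs,
      abs_of_nonneg (div_nonneg (mul_nonneg hc0 (norm_nonneg _)) (norm_nonneg _))]
    field_simp
  have hinner_v : ⟪g₀, -(α • d)⟫ = -α * ⟪g₀, d⟫ := by
    rw [inner_neg_right, real_inner_smul_right]; ring
  have hnorm_v : ‖-(α • d)‖ ^ 2 = α ^ 2 * ‖d‖ ^ 2 := by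
    rw [norm_neg, norm_smul, Real.norm_eq_abs, mul_pow, sq_abs]
  rw [hinner_v, hnorm_v, hinner_d, hnorm_d] at key
  have hHα : H * α ≤ 1 := by
    rw [le_div_iff₀ hH] at hαH; linarith [hαH]
  have hdd : (0:ℝ) ≤ 1 + 2 * c * cφ + c ^ 2 := by
    nlinarith [hnorm_d, sq_nonneg ‖d‖, pow_pos ha 2]
  -- combine
  have h1 : H / 2 * (α ^ 2 * (‖g₀‖ ^ 2 * (1 + 2 * c * cφ + c ^ 2))) ≤
      α / 2 * (‖g₀‖ ^ 2 * (1 + 2 * c * cφ + c ^ 2)) := by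
    have hnn : (0:ℝ) ≤ ‖g₀‖ ^ 2 * (1 + 2 * c * cφ + c ^ 2) := by positivity
    nlinarith [mul_nonneg (sub_nonneg.2 hHα) (mul_nonneg hα.le hnn)]
  have h2 : -α * (‖g₀‖ ^ 2 * (1 + c * cφ)) + α / 2 * (‖g₀‖ ^ 2 * (1 + 2 * c * cφ + c ^ 2)) ≤
      -(α / 2) * (1 - c ^ 2 + 2 * c * cφ) * ‖g₀‖ ^ 2 := by
    have hcφ0 : cφ ≤ 0 := hcos
    nlinarith [sq_nonneg ‖g₀‖, mul_nonneg hα.le hc0, mul_nonpos_of_nonneg_of_nonpos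
      (mul_nonneg (mul_nonneg hα.le hc0) (sq_nonneg ‖g₀‖)) hcφ0]
  linarith
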